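/- Viewing S_σ as a cyclic string, for every b ∈ {0,…,σ−1}, the 2-gram (σ−1)b occurs exactly twice in S_σ (cyclically), and the set of characters c such that (σ−1)bc occurs as a cyclic 3-gram of S_σ is exactly {σ−1, 0}. -/

import Mathlib

open List

/-- Block for symbol `a`: pairs (a,0)(a,1)⋯(a,σ-1) followed by a repeat of (a,σ-1). -/
def block (σ a : ℕ) : List ℕ :=
  ((List.range σ).flatMap fun b => [a, b]) ++ [a, σ - 1]

/-- The string S_σ: blocks for a = 0,…,σ-2 followed by the pair (σ-1,σ-1). -/
def Sstr (σ : ℕ) : List ℕ :=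
  ((List.range (σ - 1)).flatMap fun a => block σ a) ++ [σ - 1, σ - 1]

/-- Rotation of `S` by offset `i`. -/
def rot (S : List ℕ) (i : ℕ) : List ℕ := S.drop i ++ S.take i

/-- Cyclic k-gram of `S` starting at position `i` (indices mod `S.length`). -/
def cyc (S : List ℕ) (i k : ℕ) : List ℕ :=
  (List.range k).map fun j => S.getD ((i + j) % S.length) 0

/-- Number of cyclic occurrences of `u` in `S`. -/
def cOcc (S u : List ℕ) : ℕ :=
  ((List.range S.length).filter fun i => cyc S i u.length = u).length

/-- `u` occurs as a cyclic substring of `S`. -/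
def cOccurs (S u : List ℕ) : Prop := 0 < cOcc S u

/-- Number of runs (maximal blocks of equal symbols) of a list. -/
def runsCount (l : List ℕ) : ℕ := (l.destutter (· ≠ ·)).length

/-- Cyclic Burrows–Wheeler transform: sort all rotations lexicographically,
read the last column. -/
def cBWT (S : List ℕ) : List ℕ :=
  (((List.range S.length).map fun i => rot S i).insertionSort (· ≤ ·)).map
    fun ρ => ρ.getD (S.length - 1) 0

/-- Terminated string `t$`: symbols shifted by +1 and sentinel `0 = $` appended,
so the sentinel is strictly smaller than all alphabet symbols. -/
def term (t : List ℕ) : List ℕ := (t.map (· + 1)) ++ [0]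

/-- BWT of the terminated string `t$`: last column of the sorted rotation matrix. -/
def bwt (t : List ℕ) : List ℕ :=
  (((List.range (term t).length).map fun i => rot (term t) i).insertionSort (· ≤ ·)).map
    fun ρ => ρ.getD ((term t).length - 1) 0

/-- `x` is right-maximal in `w`: two distinct right extensions of `x` occur in `w`. -/
def RightMaximal (w x : List ℕ) : Prop :=
  ∃ a b : ℕ, a ≠ b ∧ (x ++ [a]) <:+: w ∧ (x ++ [b]) <:+: w

/-- The set of right-extensions of `w`. -/
def ExtSet (w : List ℕ) : Set (List ℕ) :=
  {y | ∃ x a, RightMaximal w x ∧ y = x ++ [a] ∧ y <:+: w}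

/-- Super-maximal right-extensions: right-extensions that are not a proper suffix
of another right-extension. -/
def SuperMax (w : List ℕ) : Set (List ℕ) :=
  {y ∈ ExtSet w | ∀ z ∈ ExtSet w, y <:+ z → y = z}

/-- χ: size of a smallest suffixient set = number of super-maximal right-extensions. -/
noncomputable def chi (w : List ℕ) : ℕ := (SuperMax w).ncard

/-- The regular cBWT block: each of 0,…,σ-1 twice in increasing order. -/
def patBlock (σ : ℕ) : List ℕ := (List.range σ).flatMap fun c => [c, c]

/-- The final irregular cBWT block: each of 0,…,σ-3 twice, then σ-2, σ-1, σ-2. -/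
def patFinal (σ : ℕ) : List ℕ :=
  ((List.range (σ - 2)).flatMap fun c => [c, c]) ++ [σ - 2, σ - 1, σ - 2]

/-- The canonical cBWT pattern: (σ-1) · (regular block)^m · final block. -/
def pattern (σ m : ℕ) : List ℕ :=
  [σ - 1] ++ (List.replicate m (patBlock σ)).flatten ++ patFinal σ

/-- `S` is 2-branching at order `k` over alphabet {0,…,σ-1}: every (k-1)-gram
occurs and its set of k-gram extensions is {u[0], (u[0]+1) mod σ}. -/
def TwoBranching (σ k : ℕ) (S : List ℕ) : Prop :=
  ∀ u : List ℕ, u.length = k - 1 → (∀ x ∈ u, x < σ) →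
    cOccurs S u ∧ ∀ c, c < σ →
      (cOccurs S (u ++ [c]) ↔ c = u.headD 0 ∨ c = (u.headD 0 + 1) % σ)

lemma length_flatMap_const (f : ℕ → List ℕ) (L : ℕ) (hL : ∀ a, (f a).length = L) (n : ℕ) :
    ((List.range n).flatMap f).length = n * L := by
  induction n with
  | zero => simp
  | succ n ih =>
    rw [List.range_succ, List.flatMap_append]
    simp [ih, hL, Nat.succ_mul]

lemma getD_flatMap_const (f : ℕ → List ℕ) (L : ℕ) (hL : ∀ a, (f a).length = L)
    (n i : ℕ) (hi : i < n * L) :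
    ((List.range n).flatMap f).getD i 0 = (f (i / L)).getD (i % L) 0 := by
  induction n with
  | zero => omega
  | succ n ih =>
    have hm : (n+1) * L = n * L + L := by ring
    rw [List.range_succ, List.flatMap_append]
    by_cases h : i < n * L
    · rw [List.getD_append _ _ _ _ (by rw [length_flatMap_const f L hL]; exact h)]
      exact ih h
    · rw [List.getD_append_right _ _ _ _ (by rw [length_flatMap_const f L hL]; omega)]
      have hL0 : 0 < L := by by_contra h'; omega
      have hc : L*n = n*L := Nat.mul_comm L n
      have hq : i / L = n := by
        have h1 : i = n * L + (i - n * L) := by omega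
        have h2 : i - n * L < L := by omega
        rw [h1, Nat.mul_comm n L, Nat.mul_add_div hL0, Nat.div_eq_of_lt (by omega : i - L*n < L)]
        omega
      have hr : i % L = i - n * L := by
        have h1 : i = n * L + (i - n * L) := by omega
        have h2 : i - n * L < L := by omega
        conv_lhs => rw [h1, Nat.mul_comm n L]
        rw [Nat.mul_add_mod, Nat.mod_eq_of_lt (by omega : i - L*n < L)]
        omega
      rw [length_flatMap_const f L hL, hq, hr]
      simp [List.getD]

lemma length_block (σ a : ℕ) : (block σ a).length = 2*σ+2 := by
  unfold block
  rw [List.length_append, length_flatMap_const _ 2 (fun b => by simp)]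
  simp; ring

lemma length_Sstr (σ : ℕ) (hσ : 1 ≤ σ) : (Sstr σ).length = 2*σ*σ := by
  unfold Sstr
  rw [List.length_append, length_flatMap_const _ (2*σ+2) (length_block σ)]
  simp; nlinarith [Nat.sub_add_cancel hσ]

def g (σ i : ℕ) : ℕ :=
  if 2*σ*σ - 2 ≤ i then σ - 1
  else if i % 2 = 0 then i / (2*σ+2)
  else min (i % (2*σ+2) / 2) (σ - 1)

lemma hNL (σ : ℕ) (hσ : 1 ≤ σ) : (σ-1)*(2*σ+2) = 2*σ*σ-2 := by
  obtain ⟨s, rfl⟩ : ∃ s, σ = s+1 := ⟨σ-1, by omega⟩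
  have h1 : (s+1-1)*(2*(s+1)+2) = 2*(s*s)+4*s := by simp; ring
  have h2 : 2*(s+1)*(s+1) = 2*(s*s)+4*s+2 := by ring
  omega

lemma hsL (σ : ℕ) (hσ : 2 ≤ σ) : (σ-2)*(2*σ+2) + (2*σ+4) = 2*σ*σ := by
  obtain ⟨s, rfl⟩ : ∃ s, σ = s+2 := ⟨σ-2, by omega⟩
  have h1 : (s+2-2)*(2*(s+2)+2) = 2*(s*s)+6*s := by simp; ring
  have h2 : 2*(s+2)*(s+2) = 2*(s*s)+8*s+8 := by ring
  omega

lemma hN8 (σ : ℕ) (hσ : 2 ≤ σ) : 8 ≤ 2*σ*σ := by nlinarith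

lemma g_hi (σ i : ℕ) (h : 2*σ*σ-2 ≤ i) : g σ i = σ-1 := by
  unfold g; rw [if_pos h]

lemma g_eval (σ q r : ℕ) (hσ : 2 ≤ σ) (hq : q ≤ σ-2) (hr : r < 2*σ+2) :
    g σ (q*(2*σ+2)+r) = if r % 2 = 0 then q else min (r/2) (σ-1) := by
  have hql : q*(2*σ+2) ≤ (σ-2)*(2*σ+2) := Nat.mul_le_mul_right _ hq
  have hs := hsL σ hσ
  have hlt : q*(2*σ+2)+r < 2*σ*σ-2 := by omega
  have hpar : (q*(2*σ+2)+r) % 2 = r % 2 := by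
    conv_lhs => rw [show q*(2*σ+2)+r = 2*(q*(σ+1))+r from by ring]
    rw [Nat.mul_add_mod]
  have hdiv : (q*(2*σ+2)+r) / (2*σ+2) = q := by
    rw [Nat.mul_comm q, Nat.mul_add_div (by omega), Nat.div_eq_of_lt hr, Nat.add_zero]
  have hmod : (q*(2*σ+2)+r) % (2*σ+2) = r := by
    rw [Nat.mul_comm q, Nat.mul_add_mod, Nat.mod_eq_of_lt hr]
  unfold g
  rw [if_neg (by omega), hpar, hdiv, hmod]

lemma g_repr (σ i : ℕ) (hσ : 2 ≤ σ) (hi : i < 2*σ*σ-2) :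
    ∃ q r, i = q*(2*σ+2)+r ∧ r < 2*σ+2 ∧ q ≤ σ-2 := by
  have h2 : i < (2*σ+2)*(σ-1) := by rw [Nat.mul_comm, hNL σ (by omega)]; omega
  have h3 := Nat.div_lt_of_lt_mul h2
  refine ⟨i/(2*σ+2), i%(2*σ+2), ?_, Nat.mod_lt _ (by omega), by omega⟩
  rw [Nat.mul_comm]
  exact (Nat.div_add_mod i (2*σ+2)).symm

lemma g_zero (σ : ℕ) (hσ : 2 ≤ σ) : g σ 0 = 0 := by
  have := g_eval σ 0 0 hσ (by omega) (by omega)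
  simpa using this

lemma g_one (σ : ℕ) (hσ : 2 ≤ σ) : g σ 1 = 0 := by
  have := g_eval σ 0 1 hσ (by omega) (by omega)
  simpa using this

lemma fwd (σ b : ℕ) (hσ : 2 ≤ σ) (i : ℕ) (hi : i < 2*σ*σ)
    (h1 : g σ i = σ-1) (h2 : g σ ((i+1) % (2*σ*σ)) = b) :
    (b ≤ σ-2 ∧ i = b*(2*σ+2)+(2*σ-1)) ∨
    (1 ≤ b ∧ b ≤ σ-2 ∧ i = (b-1)*(2*σ+2)+(2*σ+1)) ∨
    (b = σ-1 ∧ i = 2*σ*σ-3) ∨ (b = σ-1 ∧ i = 2*σ*σ-2) ∨ (b = 0 ∧ i = 2*σ*σ-1) := by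
  have h8 := hN8 σ hσ
  have hs := hsL σ hσ
  by_cases hc : 2*σ*σ-2 ≤ i
  · have hcc : i = 2*σ*σ-2 ∨ i = 2*σ*σ-1 := by omega
    rcases hcc with rfl | rfl
    · rw [Nat.mod_eq_of_lt (by omega)] at h2
      rw [g_hi σ _ (by omega)] at h2
      right; right; right; left; exact ⟨h2.symm, rfl⟩
    · rw [show 2*σ*σ-1+1 = 2*σ*σ from by omega, Nat.mod_self] at h2
      rw [g_zero σ hσ] at h2
      right; right; right; right; exact ⟨h2.symm, rfl⟩
  · obtain ⟨q, r, rfl, hr, hq⟩ := g_repr σ i hσ (by omega)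
    have hql : q*(2*σ+2) ≤ (σ-2)*(2*σ+2) := Nat.mul_le_mul_right _ hq
    rw [g_eval σ q r hσ hq hr] at h1
    have hr' : r = 2*σ-1 ∨ r = 2*σ+1 := by
      rcases Nat.lt_or_ge q (σ-1) with h | h
      · split at h1 <;> omega
      · omega
    rcases hr' with rfl | rfl
    · rw [show q*(2*σ+2)+(2*σ-1)+1 = q*(2*σ+2)+(2*σ) from by omega] at h2
      rw [Nat.mod_eq_of_lt (by omega)] at h2
      rw [g_eval σ q (2*σ) hσ hq (by omega), if_pos (by omega)] at h2
      left
      constructor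
      · omega
      · rw [← h2]
    · by_cases hq2 : q+1 ≤ σ-2
      · have hql2 : (q+1)*(2*σ+2) ≤ (σ-2)*(2*σ+2) := Nat.mul_le_mul_right _ hq2
        have hstep : (q+1)*(2*σ+2) = q*(2*σ+2)+(2*σ+2) := by ring
        rw [show q*(2*σ+2)+(2*σ+1)+1 = (q+1)*(2*σ+2)+0 from by omega] at h2
        rw [Nat.mod_eq_of_lt (by omega)] at h2
        rw [g_eval σ (q+1) 0 hσ hq2 (by omega), if_pos (by omega)] at h2
        right; left
        refine ⟨by omega, by omega, ?_⟩
        rw [show b-1 = q from by omega]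
      · have hq3 : q = σ-2 := by omega
        subst hq3
        rw [show (σ-2)*(2*σ+2)+(2*σ+1)+1 = 2*σ*σ-2 from by omega] at h2
        rw [Nat.mod_eq_of_lt (by omega)] at h2
        rw [g_hi σ _ (by omega)] at h2
        right; right; left
        exact ⟨h2.symm, by omega⟩

lemma key (σ : ℕ) (hσ : 2 ≤ σ) (b : ℕ) (hb : b < σ) :
    ∃ i₁ i₂ : ℕ, i₁ < 2*σ*σ ∧ i₂ < 2*σ*σ ∧ i₁ ≠ i₂ ∧
      g σ ((i₁+2) % (2*σ*σ)) = σ-1 ∧ g σ ((i₂+2) % (2*σ*σ)) = 0 ∧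
      ∀ i < 2*σ*σ, (g σ i = σ-1 ∧ g σ ((i+1) % (2*σ*σ)) = b) ↔ (i = i₁ ∨ i = i₂) := by
  have h8 := hN8 σ hσ
  have hs := hsL σ hσ
  by_cases hb1 : b = σ-1
  · subst hb1
    refine ⟨2*σ*σ-3, 2*σ*σ-2, by omega, by omega, by omega, ?_, ?_, ?_⟩
    · rw [show 2*σ*σ-3+2 = 2*σ*σ-1 from by omega, Nat.mod_eq_of_lt (by omega)]
      exact g_hi σ _ (by omega)
    · rw [show 2*σ*σ-2+2 = 2*σ*σ from by omega, Nat.mod_self]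
      exact g_zero σ hσ
    · intro i hi
      constructor
      · rintro ⟨h1, h2⟩
        rcases fwd σ (σ-1) hσ i hi h1 h2 with ⟨h, _⟩ | ⟨_, h, _⟩ | ⟨_, h⟩ | ⟨_, h⟩ | ⟨h, _⟩ <;> omega
      · rintro (rfl | rfl)
        · constructor
          · rw [show 2*σ*σ-3 = (σ-2)*(2*σ+2)+(2*σ+1) from by omega]
            rw [g_eval σ (σ-2) (2*σ+1) hσ (by omega) (by omega)]
            split <;> omega
          · rw [show 2*σ*σ-3+1 = 2*σ*σ-2 from by omega, Nat.mod_eq_of_lt (by omega)]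
            exact g_hi σ _ (by omega)
        · constructor
          · exact g_hi σ _ (by omega)
          · rw [show 2*σ*σ-2+1 = 2*σ*σ-1 from by omega, Nat.mod_eq_of_lt (by omega)]
            exact g_hi σ _ (by omega)
  · by_cases hb0 : b = 0
    · subst hb0
      refine ⟨2*σ-1, 2*σ*σ-1, by omega, by omega, by omega, ?_, ?_, ?_⟩
      · rw [show 2*σ-1+2 = 0*(2*σ+2)+(2*σ+1) from by omega, Nat.mod_eq_of_lt (by omega)]
        rw [g_eval σ 0 (2*σ+1) hσ (by omega) (by omega)]
        split <;> omega
      · rw [show 2*σ*σ-1+2 = 2*σ*σ+1 from by omega, Nat.add_mod_left,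
          Nat.mod_eq_of_lt (by omega)]
        exact g_one σ hσ
      · intro i hi
        constructor
        · rintro ⟨h1, h2⟩
          rcases fwd σ 0 hσ i hi h1 h2 with ⟨h, h'⟩ | ⟨h, _⟩ | ⟨h, _⟩ | ⟨h, _⟩ | ⟨_, h⟩
          · left; rw [h']; omega
          · omega
          · omega
          · omega
          · right; exact h
        · rintro (rfl | rfl)
          · constructor
            · rw [show 2*σ-1 = 0*(2*σ+2)+(2*σ-1) from by omega]
              rw [g_eval σ 0 (2*σ-1) hσ (by omega) (by omega)]
              split <;> omega
            · rw [show 2*σ-1+1 = 0*(2*σ+2)+(2*σ) from by omega, Nat.mod_eq_of_lt (by omega)]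
              rw [g_eval σ 0 (2*σ) hσ (by omega) (by omega)]
              split <;> omega
          · constructor
            · exact g_hi σ _ (by omega)
            · rw [show 2*σ*σ-1+1 = 2*σ*σ from by omega, Nat.mod_self]
              exact g_zero σ hσ
    · obtain ⟨c, rfl⟩ : ∃ c, b = c+1 := ⟨b-1, by omega⟩
      have hc2 : c+1 ≤ σ-2 := by omega
      have hql : (c+1)*(2*σ+2) ≤ (σ-2)*(2*σ+2) := Nat.mul_le_mul_right _ hc2
      have hql' : c*(2*σ+2) ≤ (σ-2)*(2*σ+2) := Nat.mul_le_mul_right _ (by omega)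
      have hstep : (c+1)*(2*σ+2) = c*(2*σ+2)+(2*σ+2) := by ring
      refine ⟨(c+1)*(2*σ+2)+(2*σ-1), c*(2*σ+2)+(2*σ+1), by omega, by omega, by omega,
        ?_, ?_, ?_⟩
      · rw [show (c+1)*(2*σ+2)+(2*σ-1)+2 = (c+1)*(2*σ+2)+(2*σ+1) from by omega,
          Nat.mod_eq_of_lt (by omega)]
        rw [g_eval σ (c+1) (2*σ+1) hσ hc2 (by omega)]
        split <;> omega
      · rw [show c*(2*σ+2)+(2*σ+1)+2 = (c+1)*(2*σ+2)+1 from by omega,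
          Nat.mod_eq_of_lt (by omega)]
        rw [g_eval σ (c+1) 1 hσ hc2 (by omega)]
        split <;> omega
      · intro i hi
        constructor
        · rintro ⟨h1, h2⟩
          rcases fwd σ (c+1) hσ i hi h1 h2 with ⟨h, h'⟩ | ⟨_, h, h'⟩ | ⟨h, _⟩ | ⟨h, _⟩ | ⟨h, _⟩
          · left; rw [h']
          · right; rw [h', Nat.add_sub_cancel]
          · omega
          · omega
          · omega
        · rintro (rfl | rfl)
          · constructor
            · rw [g_eval σ (c+1) (2*σ-1) hσ hc2 (by omega)]
              split <;> omega
            · rw [show (c+1)*(2*σ+2)+(2*σ-1)+1 = (c+1)*(2*σ+2)+(2*σ) from by omega,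
                Nat.mod_eq_of_lt (by omega)]
              rw [g_eval σ (c+1) (2*σ) hσ hc2 (by omega)]
              split <;> omega
          · constructor
            · rw [g_eval σ c (2*σ+1) hσ (by omega) (by omega)]
              split <;> omega
            · rw [show c*(2*σ+2)+(2*σ+1)+1 = (c+1)*(2*σ+2)+0 from by omega,
                Nat.mod_eq_of_lt (by omega)]
              rw [g_eval σ (c+1) 0 hσ hc2 (by omega)]
              split <;> omega

lemma getD_block (σ a r : ℕ) (hσ : 2 ≤ σ) (hr : r < 2*σ+2) :
    (block σ a).getD r 0 = if r % 2 = 0 then a else min (r/2) (σ-1) := by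
  unfold block
  have hlen : ((range σ).flatMap fun b => [a,b]).length = σ*2 :=
    length_flatMap_const _ 2 (fun b => by simp) σ
  by_cases h : r < σ*2
  · rw [List.getD_append _ _ _ _ (by rw [hlen]; exact h)]
    rw [getD_flatMap_const _ 2 (fun b => by simp) σ r h]
    by_cases h2 : r % 2 = 0
    · rw [if_pos h2, h2]; simp
    · rw [if_neg h2, show r % 2 = 1 from by omega]
      simp
      omega
  · rw [List.getD_append_right _ _ _ _ (by rw [hlen]; omega)]
    rw [hlen]
    have h2 : r = σ*2 ∨ r = σ*2+1 := by omega
    rcases h2 with rfl | rfl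
    · rw [if_pos (by omega), Nat.sub_self]; simp
    · rw [if_neg (by omega), show σ*2+1 - σ*2 = 1 from by omega]
      simp
      omega

lemma getD_Sstr (σ i : ℕ) (hσ : 2 ≤ σ) (hi : i < 2*σ*σ) :
    (Sstr σ).getD i 0 = g σ i := by
  unfold Sstr
  have hnl := hNL σ (by omega)
  have hlen : ((range (σ-1)).flatMap fun a => block σ a).length = (σ-1)*(2*σ+2) :=
    length_flatMap_const _ (2*σ+2) (length_block σ) _
  have h8 := hN8 σ hσ
  by_cases h : i < 2*σ*σ-2
  · rw [List.getD_append _ _ _ _ (by rw [hlen, hnl]; exact h)]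
    rw [getD_flatMap_const _ (2*σ+2) (length_block σ) (σ-1) i (by rw [hnl]; exact h)]
    rw [getD_block σ _ _ hσ (Nat.mod_lt _ (by omega))]
    have hpar : i % (2*σ+2) % 2 = i % 2 := Nat.mod_mod_of_dvd i ⟨σ+1, by ring⟩
    unfold g
    rw [if_neg (show ¬ (2*σ*σ-2 ≤ i) from by omega), hpar]
  · rw [List.getD_append_right _ _ _ _ (by rw [hlen, hnl]; omega)]
    rw [hlen, hnl, g_hi σ i (by omega)]
    have h2 : i - (2*σ*σ-2) = 0 ∨ i - (2*σ*σ-2) = 1 := by omega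
    rcases h2 with h2 | h2 <;> rw [h2] <;> simp

lemma cyc2 (S : List ℕ) (i : ℕ) :
    cyc S i 2 = [S.getD (i % S.length) 0, S.getD ((i+1) % S.length) 0] := by
  simp [cyc, List.range_succ]

lemma cyc3 (S : List ℕ) (i : ℕ) :
    cyc S i 3 = [S.getD (i % S.length) 0, S.getD ((i+1) % S.length) 0,
      S.getD ((i+2) % S.length) 0] := by
  simp [cyc, List.range_succ]

/-- for b < σ, the 2-gram (σ-1)b occurs exactly twice cyclically
in S_σ, and its set of 3-gram extensions is exactly {σ-1, 0}. -/
theorem stmt3 (σ : ℕ) (hσ : 2 ≤ σ) (b : ℕ) (hb : b < σ) :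
    cOcc (Sstr σ) [σ - 1, b] = 2 ∧
    {c | c < σ ∧ cOccurs (Sstr σ) [σ - 1, b, c]} = ({σ - 1, 0} : Set ℕ) := by
  have h8 := hN8 σ hσ
  have hlen : (Sstr σ).length = 2*σ*σ := length_Sstr σ (by omega)
  obtain ⟨i₁, i₂, hi1, hi2, hne, hext1, hext2, hiff⟩ := key σ hσ b hb
  have hcyc2 : ∀ i < 2*σ*σ, (cyc (Sstr σ) i 2 = [σ-1, b] ↔ (i = i₁ ∨ i = i₂)) := by
    intro i hi
    rw [cyc2, hlen, Nat.mod_eq_of_lt hi, getD_Sstr σ i hσ hi,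
      getD_Sstr σ _ hσ (Nat.mod_lt _ (by omega))]
    constructor
    · intro h
      simp only [List.cons.injEq, and_true] at h
      exact (hiff i hi).mp ⟨h.1, h.2⟩
    · intro h
      have := (hiff i hi).mpr h
      rw [this.1, this.2]
  have hcyc3 : ∀ i < 2*σ*σ, ∀ c, cyc (Sstr σ) i 3 = [σ-1, b, c] ↔
      (g σ i = σ-1 ∧ g σ ((i+1) % (2*σ*σ)) = b ∧ g σ ((i+2) % (2*σ*σ)) = c) := by
    intro i hi c
    rw [cyc3, hlen, Nat.mod_eq_of_lt hi, getD_Sstr σ i hσ hi,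
      getD_Sstr σ _ hσ (Nat.mod_lt _ (by omega)),
      getD_Sstr σ _ hσ (Nat.mod_lt _ (by omega))]
    simp only [List.cons.injEq, and_true]
  constructor
  · show ((List.range (Sstr σ).length).filter fun i => cyc (Sstr σ) i [σ-1, b].length = [σ-1, b]).length = 2
    have hnd : (((List.range (Sstr σ).length)).filter fun i =>
        cyc (Sstr σ) i [σ-1, b].length = [σ-1, b]).Nodup := List.nodup_range.filter _
    rw [← List.toFinset_card_of_nodup hnd]
    have hset : (((List.range (Sstr σ).length)).filter fun i =>
        cyc (Sstr σ) i [σ-1, b].length = [σ-1, b]).toFinset = {i₁, i₂} := by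
      ext x
      simp only [List.mem_toFinset, List.mem_filter, List.mem_range, decide_eq_true_eq,
        Finset.mem_insert, Finset.mem_singleton, hlen, List.length_cons, List.length_nil]
      constructor
      · rintro ⟨hx, hcx⟩
        exact (hcyc2 x hx).mp hcx
      · rintro (rfl | rfl)
        · exact ⟨hi1, (hcyc2 _ hi1).mpr (Or.inl rfl)⟩
        · exact ⟨hi2, (hcyc2 _ hi2).mpr (Or.inr rfl)⟩
    rw [hset, Finset.card_pair hne]
  · ext c
    simp only [Set.mem_setOf_eq, Set.mem_insert_iff, Set.mem_singleton_iff]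
    constructor
    · rintro ⟨hc, hocc⟩
      obtain ⟨x, hx⟩ := List.exists_mem_of_length_pos hocc
      rw [List.mem_filter, List.mem_range, decide_eq_true_eq] at hx
      obtain ⟨hxr, hcx⟩ := hx
      rw [hlen] at hxr
      have := (hcyc3 x hxr c).mp hcx
      rcases (hiff x hxr).mp ⟨this.1, this.2.1⟩ with rfl | rfl
      · left; rw [← this.2.2, hext1]
      · right; rw [← this.2.2, hext2]
    · rintro (rfl | rfl)
      · refine ⟨by omega, ?_⟩
        have hmem : i₁ ∈ (List.range (Sstr σ).length).filter fun i =>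
            cyc (Sstr σ) i [σ-1, b, σ-1].length = [σ-1, b, σ-1] := by
          rw [List.mem_filter, List.mem_range, decide_eq_true_eq, hlen]
          refine ⟨hi1, ?_⟩
          have h12 := (hiff i₁ hi1).mpr (Or.inl rfl)
          exact (hcyc3 i₁ hi1 (σ-1)).mpr ⟨h12.1, h12.2, hext1⟩
        exact List.length_pos_of_mem hmem
      · refine ⟨by omega, ?_⟩
        have hmem : i₂ ∈ (List.range (Sstr σ).length).filter fun i =>
            cyc (Sstr σ) i [σ-1, b, 0].length = [σ-1, b, 0] := by
          rw [List.mem_filter, List.mem_range, decide_eq_true_eq, hlen]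
          refine ⟨hi2, ?_⟩
          have h12 := (hiff i₂ hi2).mpr (Or.inr rfl)
          exact (hcyc3 i₂ hi2 0).mpr ⟨h12.1, h12.2, hext2⟩
        exact List.length_pos_of_mem hmem
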